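/- Rank-1 completeness of the translated probe states for quantum detector tomography: Let d ≥ 2 and let φ, χ ∈ ℂ^d with φ_0 ≠ 0; set F = φφ† and G = χχ†. Suppose Tr(F ρ) = Tr(G ρ) for every ρ among: ρ_0 = e_0e_0†; ρ_k = (1/d)(𝟙 + e_0e_k† + e_ke_0†) and ρ̃_k = (1/d)(𝟙 − i·e_0e_k† + i·e_ke_0†) for k = 1, …, d−1; and the maximally mixed state (1/d)·𝟙. Then F = G. -/

import Mathlib

open Matrix

/-- The rank-one (outer-product) matrix `ψψ†`, with entries `ψ_j · conj(ψ_k)`. -/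
noncomputable def outerProd {n : Type*} (ψ : n → ℂ) : Matrix n n ℂ :=
  Matrix.of fun j k => ψ j * star (ψ k)

lemma tr_outer_std {d : ℕ} (ψ : Fin d → ℂ) (a b : Fin d) :
    (outerProd ψ * Matrix.single a b 1).trace = ψ b * star (ψ a) := by
  simp only [Matrix.trace, Matrix.diag, Matrix.mul_apply, outerProd, Matrix.single,
    Matrix.of_apply]
  rw [Finset.sum_comm]
  simp [ite_and, Finset.sum_ite_eq]

/-- **Rank-1 completeness of the translated probe states for detector tomography.**
If the rank-1 detector elements `F = φφ†` (with `φ₀ ≠ 0`) and `G = χχ†` give the same outcome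
numbers `Tr(F ρ)` on the probe states `ρ₀ = e₀e₀†`, `ρ_k = (1/d)(𝟙 + e₀e_k† + e_ke₀†)`,
`ρ̃_k = (1/d)(𝟙 − i e₀e_k† + i e_ke₀†)` (k = 1,…,d−1) and the maximally mixed state `(1/d)𝟙`,
then `F = G`. -/
theorem detector_rank1_complete (d : ℕ) (hd : 2 ≤ d)
    (φ χ : Fin d → ℂ) (hφ0 : φ ⟨0, by omega⟩ ≠ 0)
    (h0 : (outerProd φ * Matrix.single (⟨0, by omega⟩ : Fin d) (⟨0, by omega⟩ : Fin d) 1).trace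
        = (outerProd χ * Matrix.single (⟨0, by omega⟩ : Fin d) (⟨0, by omega⟩ : Fin d) 1).trace)
    (hk : ∀ k : Fin d, k ≠ ⟨0, by omega⟩ →
      (outerProd φ * (((d : ℂ))⁻¹ • ((1 : Matrix (Fin d) (Fin d) ℂ)
          + Matrix.single (⟨0, by omega⟩ : Fin d) k 1
          + Matrix.single k (⟨0, by omega⟩ : Fin d) 1))).trace
        = (outerProd χ * (((d : ℂ))⁻¹ • ((1 : Matrix (Fin d) (Fin d) ℂ)
          + Matrix.single (⟨0, by omega⟩ : Fin d) k 1
          + Matrix.single k (⟨0, by omega⟩ : Fin d) 1))).trace)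
    (hkt : ∀ k : Fin d, k ≠ ⟨0, by omega⟩ →
      (outerProd φ * (((d : ℂ))⁻¹ • ((1 : Matrix (Fin d) (Fin d) ℂ)
          - Complex.I • Matrix.single (⟨0, by omega⟩ : Fin d) k 1
          + Complex.I • Matrix.single k (⟨0, by omega⟩ : Fin d) 1))).trace
        = (outerProd χ * (((d : ℂ))⁻¹ • ((1 : Matrix (Fin d) (Fin d) ℂ)
          - Complex.I • Matrix.single (⟨0, by omega⟩ : Fin d) k 1
          + Complex.I • Matrix.single k (⟨0, by omega⟩ : Fin d) 1))).trace)
    (hmix : (outerProd φ * (((d : ℂ))⁻¹ • (1 : Matrix (Fin d) (Fin d) ℂ))).trace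
          = (outerProd χ * (((d : ℂ))⁻¹ • (1 : Matrix (Fin d) (Fin d) ℂ))).trace) :
    outerProd φ = outerProd χ := by
  set z : Fin d := ⟨0, by omega⟩ with hz
  have hd0 : (d : ℂ) ≠ 0 := by
    simpa using Nat.cast_ne_zero (R := ℂ).mpr (by omega)
  have hdinv : ((d : ℂ))⁻¹ ≠ 0 := inv_ne_zero hd0
  have h00 : φ z * star (φ z) = χ z * star (χ z) := by
    simpa [tr_outer_std] using h0
  have hmix' : (outerProd φ).trace = (outerProd χ).trace := by
    rw [Matrix.mul_smul, Matrix.mul_smul, Matrix.mul_one, Matrix.mul_one,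
      Matrix.trace_smul, Matrix.trace_smul] at hmix
    simp only [smul_eq_mul] at hmix
    exact mul_left_cancel₀ hdinv hmix
  have key : ∀ k : Fin d, φ k * star (φ z) = χ k * star (χ z) := by
    intro k
    by_cases hk0 : k = z
    · simpa [hk0] using h00
    · have h1 := hk k hk0
      have h2 := hkt k hk0
      rw [Matrix.mul_smul, Matrix.mul_smul, Matrix.trace_smul, Matrix.trace_smul,
        Matrix.mul_add, Matrix.mul_add, Matrix.mul_one, Matrix.trace_add, Matrix.trace_add,
        Matrix.mul_add, Matrix.mul_add, Matrix.mul_one, Matrix.trace_add, Matrix.trace_add,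
        tr_outer_std, tr_outer_std, tr_outer_std, tr_outer_std] at h1
      simp only [smul_eq_mul] at h1
      have h1' := mul_left_cancel₀ hdinv h1
      rw [Matrix.mul_smul, Matrix.mul_smul, Matrix.trace_smul, Matrix.trace_smul,
        Matrix.mul_add, Matrix.mul_add, Matrix.mul_sub, Matrix.mul_sub,
        Matrix.mul_one, Matrix.mul_one, Matrix.mul_smul, Matrix.mul_smul,
        Matrix.mul_smul, Matrix.mul_smul,
        Matrix.trace_add, Matrix.trace_add, Matrix.trace_sub, Matrix.trace_sub,
        Matrix.trace_smul, Matrix.trace_smul, Matrix.trace_smul, Matrix.trace_smul,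
        tr_outer_std, tr_outer_std, tr_outer_std, tr_outer_std] at h2
      simp only [smul_eq_mul] at h2
      have h2' := mul_left_cancel₀ hdinv h2
      simp (failIfUnchanged := false) only [smul_eq_mul] at h1' h2'
      linear_combination (h1' - hmix') / 2 + Complex.I * (h2' - hmix') / 2
        + ((φ k * star (φ z) - φ z * star (φ k) - χ k * star (χ z) + χ z * star (χ k)) / 2)
          * Complex.I_sq
  ext j k
  simp only [outerProd, Matrix.of_apply]
  have hj := key j
  have hk' := key k
  have hk'' : star (φ k) * φ z = star (χ k) * χ z := by
    have := congrArg star hk'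
    simpa [star_mul', star_star] using this
  have hcancel : (φ j * star (φ k)) * (φ z * star (φ z))
      = (χ j * star (χ k)) * (φ z * star (φ z)) := by
    linear_combination (star (φ k) * φ z) * hj + (χ j * star (χ z)) * hk''
      - (χ j * star (χ k)) * h00
  have hz0 : φ z * star (φ z) ≠ 0 := mul_ne_zero hφ0 (star_ne_zero.mpr hφ0)
  exact mul_right_cancel₀ hz0 hcancel
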